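/- Let Q(x̄) = (O, Σ, q) be an OMQ with O an ALCI ontology and q a bELIQ (an ELIQ or Boolean ELIQ), D a Σ-database, and ā ∈ adom(D)^{|x̄|}. Then: (1) ā is a certain answer to (O≈, Σ, q) on D, where O≈ consists of all ELI^u_⊥ concept inclusions entailed by O, if and only if ā is a certain answer to (O, Σ, q) on the tree unraveling D≈_∅ of D; and (2) D is satisfiable w.r.t. O≈ if and only if D≈_∅ is satisfiable w.r.t. O. -/

import Mathlib

set_option autoImplicit false

attribute [local instance] Classical.propDecidable

/-! ### Interpretations, databases, homomorphisms -/

structure Interp (C R A : Type) where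
  cn : C → A → Prop
  rn : R → A → A → Prop

namespace Interp

variable {C R A : Type}

/-- The active domain of an interpretation/database. -/
def adom (I : Interp C R A) : Set A :=
  {a | (∃ c, I.cn c a) ∨ (∃ r b, I.rn r a b) ∨ (∃ r b, I.rn r b a)}

/-- An interpretation has finitely many facts (this is what makes it a database). -/
def FiniteFacts (I : Interp C R A) : Prop :=
  {p : C × A | I.cn p.1 p.2}.Finite ∧ {t : R × A × A | I.rn t.1 t.2.1 t.2.2}.Finite

/-- All facts use only symbols from the signature `(SC, SR)`. -/
def InSig (I : Interp C R A) (SC : Set C) (SR : Set R) : Prop :=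
  (∀ c a, I.cn c a → c ∈ SC) ∧ (∀ r a b, I.rn r a b → r ∈ SR)

/-- Restriction of an interpretation to a set of elements. -/
def restrict (I : Interp C R A) (s : Set A) : Interp C R A where
  cn c a := a ∈ s ∧ I.cn c a
  rn r a b := a ∈ s ∧ b ∈ s ∧ I.rn r a b

/-- Semantics of (possibly inverse) roles: `Sum.inl r` is `r`, `Sum.inr r` is `r⁻`. -/
def roleE (I : Interp C R A) : R ⊕ R → A → A → Prop
  | .inl r, a, b => I.rn r a b
  | .inr r, a, b => I.rn r b a

/-- The undirected graph underlying an interpretation. -/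
def graphOf (I : Interp C R A) : SimpleGraph A where
  Adj a b := a ≠ b ∧ ∃ r, I.rn r a b ∨ I.rn r b a
  symm := ⟨by rintro a b ⟨hne, r, hr⟩; exact ⟨hne.symm, r, hr.symm⟩⟩
  loopless := ⟨by rintro a ⟨hne, -⟩; exact hne rfl⟩

/-- A database/interpretation is a tree: the underlying graph is acyclic,
there are no self loops and no multi-edges (trees need not be connected). -/
def IsTree (I : Interp C R A) : Prop :=
  I.graphOf.IsAcyclic ∧ (∀ r a, ¬ I.rn r a a) ∧
    (∀ (ρ₁ ρ₂ : R ⊕ R) (a b : A), ρ₁ ≠ ρ₂ → I.roleE ρ₁ a b → ¬ I.roleE ρ₂ a b)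

end Interp

/-- Homomorphisms between interpretations. -/
structure Hom {C R A B : Type} (I : Interp C R A) (J : Interp C R B) where
  toFun : A → B
  map_cn : ∀ c a, I.cn c a → J.cn c (toFun a)
  map_rn : ∀ r a b, I.rn r a b → J.rn r (toFun a) (toFun b)

/-! ### Tree decompositions and treewidth -/

/-- An `(ℓ,k)`-tree decomposition of an interpretation: an undirected tree `(V,G)`
with bags of size at most `k`, pairwise overlaps of size at most `ℓ`, every active
element appearing in a nonempty connected set of bags, and every role edge
contained in some bag. -/
structure TreeDecomp {C R A : Type} (I : Interp C R A) (ℓ k : ℕ) where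
  V : Type
  G : SimpleGraph V
  conn : G.Connected
  acyc : G.IsAcyclic
  bag : V → Set A
  cover : ∀ a ∈ I.adom, (G.induce {v | a ∈ bag v}).Connected
  edges : ∀ r a b, I.rn r a b → ∃ v, a ∈ bag v ∧ b ∈ bag v
  bagFin : ∀ v, (bag v).Finite
  bagCard : ∀ v, (bag v).ncard ≤ k
  overlap : ∀ v w, v ≠ w → (bag v ∩ bag w).ncard ≤ ℓ

/-- `I` has treewidth `(ℓ,k)`. -/
def HasTW {C R A : Type} (I : Interp C R A) (ℓ k : ℕ) : Prop :=
  Nonempty (TreeDecomp I ℓ k)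

/-! ### Conjunctive queries and UCQs -/

/-- A conjunctive query with `m` answer variables (`Fin m`) and quantified
variables `V`. -/
structure CQ (C R : Type) (m : ℕ) where
  V : Type
  cnAtoms : Set (C × (Fin m ⊕ V))
  rnAtoms : Set (R × (Fin m ⊕ V) × (Fin m ⊕ V))

namespace CQ

variable {C R A : Type} {m : ℕ}

/-- `I ⊨ q(atup)`. -/
def Eval (q : CQ C R m) (I : Interp C R A) (atup : Fin m → A) : Prop :=
  ∃ h : Fin m ⊕ q.V → A, (∀ i, h (.inl i) = atup i) ∧
    (∀ p ∈ q.cnAtoms, I.cn p.1 (h p.2)) ∧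
    (∀ t ∈ q.rnAtoms, I.rn t.1 (h t.2.1) (h t.2.2))

/-- The canonical database of a CQ (all variables as constants). -/
def canon (q : CQ C R m) : Interp C R (Fin m ⊕ q.V) where
  cn c x := (c, x) ∈ q.cnAtoms
  rn r x y := (r, x, y) ∈ q.rnAtoms

/-- The treewidth of a CQ: the treewidth of its canonical database restricted to
the quantified variables (answer variables do not contribute). -/
def HasTWq (q : CQ C R m) (ℓ k : ℕ) : Prop :=
  HasTW (q.canon.restrict (Set.range Sum.inr)) ℓ k

end CQ

/-- A union of conjunctive queries, as an indexed family of CQs of the same arity. -/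
structure UCQ (C R : Type) (m : ℕ) where
  ι : Type
  d : ι → CQ C R m

def UCQ.Eval {C R A : Type} {m : ℕ} (q : UCQ C R m) (I : Interp C R A)
    (atup : Fin m → A) : Prop :=
  ∃ i, (q.d i).Eval I atup

/-! ### Certain answers (generic in the ontology semantics) -/

/-- `atup` is a certain answer on `D` for query semantics `Ev`, w.r.t. all
(nonempty) models satisfying `Mod`: under the standard-names-free reading,
models of `D` are interpretations together with a homomorphism from `D`. -/
def Certain {C R A : Type} {m : ℕ} (Mod : ∀ Δ : Type, Interp C R Δ → Prop)
    (D : Interp C R A) (Ev : ∀ Δ : Type, Interp C R Δ → (Fin m → Δ) → Prop)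
    (atup : Fin m → A) : Prop :=
  ∀ (Δ : Type), Nonempty Δ → ∀ I : Interp C R Δ, Mod Δ I →
    ∀ h : Hom D I, Ev Δ I (fun i => h.toFun (atup i))

/-- `D` is satisfiable w.r.t. the class of models described by `Mod`. -/
def Satisfiable {C R A : Type} (Mod : ∀ Δ : Type, Interp C R Δ → Prop)
    (D : Interp C R A) : Prop :=
  ∃ (Δ : Type) (_ : Nonempty Δ) (I : Interp C R Δ), Nonempty (Hom D I) ∧ Mod Δ I

/-! ### First-order logic (no equality, no constants) -/

inductive FO (C R : Type) : ℕ → Type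
  | cn {n : ℕ} (c : C) (i : Fin n) : FO C R n
  | rn {n : ℕ} (r : R) (i j : Fin n) : FO C R n
  | fls {n : ℕ} : FO C R n
  | imp {n : ℕ} (φ ψ : FO C R n) : FO C R n
  | all {n : ℕ} (φ : FO C R (n+1)) : FO C R n

def FO.Eval {C R A : Type} (I : Interp C R A) : {n : ℕ} → FO C R n → (Fin n → A) → Prop
  | _, .cn c i, v => I.cn c (v i)
  | _, .rn r i j, v => I.rn r (v i) (v j)
  | _, .fls, _ => False
  | _, .imp φ ψ, v => φ.Eval I v → ψ.Eval I v
  | _, .all φ, v => ∀ a, φ.Eval I (Fin.cons a v)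

/-- `I` is a model of the FO ontology `O`. -/
def ModelsFO {C R A : Type} (I : Interp C R A) (O : Set (FO C R 0)) : Prop :=
  ∀ φ ∈ O, φ.Eval I (fun i => i.elim0)

/-- `O ⊨ O'` for FO ontologies. -/
def FOEntails {C R : Type} (O O' : Set (FO C R 0)) : Prop :=
  ∀ (Δ : Type), Nonempty Δ → ∀ I : Interp C R Δ, ModelsFO I O → ModelsFO I O'

/-! ### Tuple-generating dependencies -/

/-- A TGD with `n` frontier variables, whose body and head are CQs with the
frontier variables as answer variables; `head = none` stands for `⊥`. -/
structure TGD (C R : Type) where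
  n : ℕ
  body : CQ C R n
  head : Option (CQ C R n)

def TGD.Sat {C R A : Type} (t : TGD C R) (I : Interp C R A) : Prop :=
  ∀ v : Fin t.n → A, t.body.Eval I v →
    match t.head with
    | some ψ => ψ.Eval I v
    | none => False

def ModelsTGDSet {C R A : Type} (I : Interp C R A) (O : Set (TGD C R)) : Prop :=
  ∀ t ∈ O, t.Sat I

/-! ### Description logic concepts -/

/-- `ELIU` concepts with ⊥, possibly disjunction and the universal role. -/
inductive ELIU (C R : Type) : Type
  | top
  | bot
  | cn (c : C)
  | inter (X Y : ELIU C R)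
  | union (X Y : ELIU C R)
  | exR (ρ : R ⊕ R) (X : ELIU C R)
  | exU (X : ELIU C R)

namespace ELIU

variable {C R A : Type}

def sem (I : Interp C R A) : ELIU C R → A → Prop
  | .top, _ => True
  | .bot, _ => False
  | .cn c, a => I.cn c a
  | .inter X Y, a => X.sem I a ∧ Y.sem I a
  | .union X Y, a => X.sem I a ∨ Y.sem I a
  | .exR ρ X, a => ∃ b, I.roleE ρ a b ∧ X.sem I b
  | .exU X, _ => ∃ b, X.sem I b

def uFree : ELIU C R → Prop
  | .top => True
  | .bot => True
  | .cn _ => True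
  | .inter X Y => X.uFree ∧ Y.uFree
  | .union X Y => X.uFree ∧ Y.uFree
  | .exR _ X => X.uFree
  | .exU _ => False

def disjFree : ELIU C R → Prop
  | .top => True
  | .bot => True
  | .cn _ => True
  | .inter X Y => X.disjFree ∧ Y.disjFree
  | .union _ _ => False
  | .exR _ X => X.disjFree
  | .exU X => X.disjFree

def botFree : ELIU C R → Prop
  | .top => True
  | .bot => False
  | .cn _ => True
  | .inter X Y => X.botFree ∧ Y.botFree
  | .union X Y => X.botFree ∧ Y.botFree
  | .exR _ X => X.botFree
  | .exU X => X.botFree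

end ELIU

/-- A concept inclusion is an `ELI_⊥` CI (no disjunction, no universal role). -/
def ELIbotCI {C R : Type} (p : ELIU C R × ELIU C R) : Prop :=
  p.1.disjFree ∧ p.1.uFree ∧ p.2.disjFree ∧ p.2.uFree

/-- A concept inclusion is an `ELI` CI. -/
def ELICI {C R : Type} (p : ELIU C R × ELIU C R) : Prop :=
  ELIbotCI p ∧ p.1.botFree ∧ p.2.botFree

def ModelsELIUOnt {C R A : Type} (I : Interp C R A)
    (T : Set (ELIU C R × ELIU C R)) : Prop :=
  ∀ p ∈ T, ∀ a, p.1.sem I a → p.2.sem I a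

def EntailsELIU {C R : Type} (T T' : Set (ELIU C R × ELIU C R)) : Prop :=
  ∀ (Δ : Type), Nonempty Δ → ∀ I : Interp C R Δ, ModelsELIUOnt I T → ModelsELIUOnt I T'

/-- `ALCI` concepts. -/
inductive ALCI (C R : Type) : Type
  | top
  | cn (c : C)
  | neg (X : ALCI C R)
  | inter (X Y : ALCI C R)
  | exR (ρ : R ⊕ R) (X : ALCI C R)

namespace ALCI

variable {C R A : Type}

def sem (I : Interp C R A) : ALCI C R → A → Prop
  | .top, _ => True
  | .cn c, a => I.cn c a
  | .neg X, a => ¬ X.sem I a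
  | .inter X Y, a => X.sem I a ∧ Y.sem I a
  | .exR ρ X, a => ∃ b, I.roleE ρ a b ∧ X.sem I b

/-- `C ⊔ D` as an abbreviation. -/
def unionA (X Y : ALCI C R) : ALCI C R := .neg (.inter (.neg X) (.neg Y))

/-- `∀r.C` as an abbreviation. -/
def allR (r : R) (X : ALCI C R) : ALCI C R := .neg (.exR (.inl r) (.neg X))

/-- `∃rⁿ.C` (n-fold nesting). -/
def exPow (r : R) : ℕ → ALCI C R → ALCI C R
  | 0, X => X
  | n+1, X => .exR (.inl r) (exPow r n X)

end ALCI

def ModelsALCIOnt {C R A : Type} (I : Interp C R A)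
    (O : Set (ALCI C R × ALCI C R)) : Prop :=
  ∀ p ∈ O, ∀ a, p.1.sem I a → p.2.sem I a

def EntailsALCI {C R : Type} (O O' : Set (ALCI C R × ALCI C R)) : Prop :=
  ∀ (Δ : Type), Nonempty Δ → ∀ I : Interp C R Δ, ModelsALCIOnt I O → ModelsALCIOnt I O'

/-- The set `O≈` of all `ELI^u_⊥` concept inclusions entailed by the ALCI
ontology `O`. -/
def ELIuApprox {C R : Type} (O : Set (ALCI C R × ALCI C R)) :
    Set (ELIU C R × ELIU C R) :=
  {p | p.1.disjFree ∧ p.2.disjFree ∧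
    ∀ (Δ : Type), Nonempty Δ → ∀ I : Interp C R Δ, ModelsALCIOnt I O →
      ∀ a, p.1.sem I a → p.2.sem I a}

/-! ### bELIQs -/

/-- A bELIQ: either an ELIQ `C(x)` (unary) or a Boolean ELIQ `∃u.C`. -/
inductive BELIQ (C R : Type) : Type
  | q1 (X : ELIU C R)
  | q0 (X : ELIU C R)

namespace BELIQ

variable {C R A : Type}

def arity : BELIQ C R → ℕ
  | .q1 _ => 1
  | .q0 _ => 0

/-- Well-formedness: the underlying concept is an `ELI` concept. -/
def wf : BELIQ C R → Prop
  | .q1 X => X.disjFree ∧ X.uFree ∧ X.botFree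
  | .q0 X => X.disjFree ∧ X.uFree ∧ X.botFree

def Eval : (q : BELIQ C R) → Interp C R A → (Fin q.arity → A) → Prop
  | .q1 X, I, v => X.sem I (v ⟨0, Nat.zero_lt_one⟩)
  | .q0 X, I, _ => ∃ a, X.sem I a

end BELIQ

/-! ### Tree unraveling -/

/-- Paths in a database, indexed by their tail. -/
inductive UPath {C R A : Type} (I : Interp C R A) : A → Type
  | nil (a : A) : UPath I a
  | cons {a : A} (p : UPath I a) (ρ : R ⊕ R) (b : A) (h : I.roleE ρ a b) : UPath I b

/-- The tree unraveling `D≈_S` of `D` at `S`: it contains all facts of `D|_S`,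
the facts along paths, and the connecting facts between `S` and paths. -/
def treeUnravel {C R A : Type} (D : Interp C R A) (S : Set A) :
    Interp C R (A ⊕ (Σ a : A, UPath D a)) where
  cn c x :=
    match x with
    | .inl a => a ∈ S ∧ D.cn c a
    | .inr p => D.cn c p.1
  rn r x y :=
    (∃ a b, a ∈ S ∧ b ∈ S ∧ D.rn r a b ∧ x = .inl a ∧ y = .inl b) ∨
    (∃ (a : A) (p : UPath D a) (b : A) (h : D.roleE (.inl r) a b),
        x = .inr ⟨a, p⟩ ∧ y = .inr ⟨b, p.cons (.inl r) b h⟩) ∨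
    (∃ (a : A) (p : UPath D a) (b : A) (h : D.roleE (.inr r) a b),
        y = .inr ⟨a, p⟩ ∧ x = .inr ⟨b, p.cons (.inr r) b h⟩) ∨
    (∃ (a b : A) (p : UPath D b), a ∈ S ∧ D.rn r a b ∧ x = .inl a ∧ y = .inr ⟨b, p⟩) ∨
    (∃ (a b : A) (p : UPath D b), a ∈ S ∧ D.rn r b a ∧ x = .inr ⟨b, p⟩ ∧ y = .inl a)

/-! ### (ℓ,k)-unraveling -/

/-- Admissibility of a bag `T` in an `(ℓ,k)`-sequence: `S ⊆ T ⊆ adom(D)` and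
`|T \ S| ≤ k`. -/
def SeqOk {C R A : Type} (D : Interp C R A) (S : Set A) (k : ℕ) (T : Set A) : Prop :=
  S ⊆ T ∧ T ⊆ D.adom ∧ (T \ S).Finite ∧ (T \ S).ncard ≤ k

/-- `(ℓ,k)`-sequences `S₀,O₀,S₁,…,Sₙ`, indexed by the last bag `Sₙ`. -/
inductive LKSeq {C R A : Type} (D : Interp C R A) (S : Set A) (ℓ k : ℕ) : Set A → Type
  | first (S₀ : Set A) (h : SeqOk D S k S₀) : LKSeq D S ℓ k S₀
  | step {T : Set A} (v : LKSeq D S ℓ k T) (O T' : Set A)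
      (hO : S ⊆ O) (hOT : O ⊆ T ∩ T') (hOf : (O \ S).Finite)
      (hOl : (O \ S).ncard ≤ ℓ) (hT' : SeqOk D S k T') : LKSeq D S ℓ k T'

/-- Elements of the `(ℓ,k)`-unraveling: elements of `S` keep their names
(`Sum.inl`), all other copies are identified by the sequence at which they are
introduced. -/
abbrev LKElem {C R A : Type} (D : Interp C R A) (S : Set A) (ℓ k : ℕ) : Type :=
  A ⊕ (Σ T : Set A, LKSeq D S ℓ k T × A)

/-- The copy `a_v` of `a` in the bag of the sequence `v`. -/
noncomputable def LKSeq.rep {C R A : Type} {D : Interp C R A} {S : Set A} {ℓ k : ℕ} :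
    {T : Set A} → LKSeq D S ℓ k T → A → LKElem D S ℓ k
  | _, .first S₀ h, a =>
      if a ∈ S then Sum.inl a else Sum.inr ⟨S₀, (LKSeq.first S₀ h, a)⟩
  | _, .step v O T' h1 h2 h3 h4 h5, a =>
      if a ∈ S then Sum.inl a
      else if a ∈ O then v.rep a
      else Sum.inr ⟨T', (LKSeq.step v O T' h1 h2 h3 h4 h5, a)⟩

/-- The `(ℓ,k)`-unraveling `D≈_{S,ℓ,k}` of `D` up to `S`. -/
noncomputable def unravelLK {C R A : Type} (D : Interp C R A) (S : Set A) (ℓ k : ℕ) :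
    Interp C R (LKElem D S ℓ k) where
  cn c x := ∃ (T : Set A) (v : LKSeq D S ℓ k T) (a : A),
      a ∈ T ∧ x = v.rep a ∧ D.cn c a
  rn r x y := ∃ (T : Set A) (v : LKSeq D S ℓ k T) (a b : A),
      a ∈ T ∧ b ∈ T ∧ x = v.rep a ∧ y = v.rep b ∧ D.rn r a b

/-- The uncopying map. -/
def uncopyLK {C R A : Type} {D : Interp C R A} {S : Set A} {ℓ k : ℕ} :
    LKElem D S ℓ k → A
  | .inl a => a
  | .inr x => x.2.2

/-- `x` is a copy of `a` in the `(ℓ,k)`-unraveling. -/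
def IsCopyLK {C R A : Type} {D : Interp C R A} {S : Set A} {ℓ k : ℕ}
    (x : LKElem D S ℓ k) (a : A) : Prop :=
  ∃ (T : Set A) (v : LKSeq D S ℓ k T), a ∈ T ∧ x = v.rep a

/-- The frontier-one `ℓ,k,ℓ',k'`-TGDs entailed by the ALCI ontology `O`. -/
def approxTGDs {C R : Type} (O : Set (ALCI C R × ALCI C R)) (ℓ k ℓ' k' : ℕ) :
    Set (TGD C R) :=
  {t | t.n ≤ 1 ∧ HasTW t.body.canon ℓ k ∧
       (∀ ψ, t.head = some ψ → HasTW ψ.canon ℓ' k') ∧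
       ∀ (Δ : Type), Nonempty Δ → ∀ I : Interp C R Δ, ModelsALCIOnt I O → t.Sat I}

/-! ### The disjunct operation f and the approximation set E_O -/

def fDisj {C R : Type} : ELIU C R → Set (ELIU C R)
  | .top => {ELIU.top}
  | .bot => {ELIU.bot}
  | .cn c => {ELIU.cn c}
  | .inter X Y => {Z | ∃ X' ∈ fDisj X, ∃ Y' ∈ fDisj Y, Z = ELIU.inter X' Y'}
  | .union X Y => fDisj X ∪ fDisj Y
  | .exR ρ X => {Z | ∃ X' ∈ fDisj X, Z = ELIU.exR ρ X'}
  | .exU X => {Z | ∃ X' ∈ fDisj X, Z = ELIU.exU X'}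

/-- The rewriting of `O` replacing each `C ⊑ D` by `{C' ⊑ D : C' ∈ f(C)}`. -/
def rewriteO {C R : Type} (O : Set (ELIU C R × ELIU C R)) :
    Set (ELIU C R × ELIU C R) :=
  {p | ∃ q ∈ O, p.2 = q.2 ∧ p.1 ∈ fDisj q.1}

/-- `E_O`: all ontologies obtained by choosing, for each inclusion `C' ⊑ D` of
the rewriting, one inclusion `C' ⊑ D'` with `D' ∈ f(D)`. -/
def EO {C R : Type} (O : Set (ELIU C R × ELIU C R)) :
    Set (Set (ELIU C R × ELIU C R)) :=
  {Oh | ∃ g : ELIU C R × ELIU C R → ELIU C R,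
      (∀ p ∈ rewriteO O, g p ∈ fDisj p.2) ∧
      Oh = {q | ∃ p ∈ rewriteO O, q = (p.1, g p)}}

/-! ### Direct products -/

def prodInterp {C R : Type} {n : ℕ} {A : Fin n → Type}
    (I : ∀ i, Interp C R (A i)) : Interp C R (∀ i, A i) where
  cn c f := ∀ i, (I i).cn c (f i)
  rn r f g := ∀ i, (I i).rn r (f i) (g i)

/-! ### Concrete databases and queries for specific statements -/

/-- The grid CQ `q_m` of Statement 16, as its canonical database. -/
def gridDB {C R : Type} (m : ℕ) (r : R) (Aname : Fin m × Fin m → C) :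
    Interp C R (Fin m × Fin m) where
  cn c p := c = Aname p
  rn ρ p q := ρ = r ∧ Even (p.1.1 + p.2.1) ∧
    ((p.1.1 : ℤ) - (q.1.1 : ℤ)).natAbs + ((p.2.1 : ℤ) - (q.2.1 : ℤ)).natAbs = 1

/-- The 3-cycle database of Statement 19. -/
def cycleDB {C R : Type} (nA : Fin 3 → C) (r : R) : Interp C R (Fin 3) where
  cn c i := c = nA i
  rn ρ i j := ρ = r ∧ j = i + 1

/-- The ontology `{Aᵢ ⊓ Aⱼ ⊑ B : 1 ≤ i < j ≤ 3}` of Statement 19. -/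
def cycleOnt {C R : Type} (nA : Fin 3 → C) (nB : C) : Set (ELIU C R × ELIU C R) :=
  {p | ∃ i j : Fin 3, i < j ∧
    p = (ELIU.inter (ELIU.cn (nA i)) (ELIU.cn (nA j)), ELIU.cn nB)}

/-- The Boolean CQ `∃x B(x)` of Statement 19. -/
def existsB {C R : Type} (nB : C) : CQ C R 0 where
  V := Unit
  cnAtoms := {(nB, Sum.inr ())}
  rnAtoms := ∅

/-- The ontology `O = {∃r.⊤ ⊓ ∀r.A ⊑ B₁ ⊔ B₂}` of Statement 14. -/
def O14 {C R : Type} (a b1 b2 : C) (r : R) : Set (ALCI C R × ALCI C R) :=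
  {(ALCI.inter (ALCI.exR (.inl r) ALCI.top) (ALCI.allR r (ALCI.cn a)),
    ALCI.unionA (ALCI.cn b1) (ALCI.cn b2))}

/-- The ontology `O_n` of Statement 14. -/
def O14n {C R : Type} (a b1 x : C) (r : R) (n : ℕ) : Set (ALCI C R × ALCI C R) :=
  {(ALCI.exR (.inl r) (ALCI.cn a), ALCI.exPow r n (ALCI.cn x)),
   (ALCI.exR (.inl r) (ALCI.inter (ALCI.cn a) (ALCI.exPow r (n-1) (ALCI.cn x))),
    ALCI.cn b1)}


/-! ### Auxiliary infrastructure for Statement 8 -/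

namespace Stmt8

open Interp

variable {C R A : Type}

/-- Any model of an ALCI ontology models its ELI^u_⊥ approximation. -/
lemma models_approx {Δ : Type} (O : Set (ALCI C R × ALCI C R)) (hne : Nonempty Δ)
    (I : Interp C R Δ) (hI : ModelsALCIOnt I O) :
    ModelsELIUOnt I (ELIuApprox O) := by
  intro p hp a ha
  exact hp.2.2 Δ hne I hI a ha

/-! #### Ultraproducts (without equality, no quotient needed) -/

/-- The "ultraproduct" interpretation. -/
def uProd (Uf : Ultrafilter ℕ) (Δf : ℕ → Type) (If : ∀ n, Interp C R (Δf n)) :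
    Interp C R (∀ n, Δf n) where
  cn c φ := {n | (If n).cn c (φ n)} ∈ Uf
  rn r φ ψ := {n | (If n).rn r (φ n) (ψ n)} ∈ Uf

lemma uProd_roleE (Uf : Ultrafilter ℕ) (Δf : ℕ → Type) (If : ∀ n, Interp C R (Δf n))
    (ρ : R ⊕ R) (φ ψ : ∀ n, Δf n) :
    (uProd Uf Δf If).roleE ρ φ ψ ↔ {n | (If n).roleE ρ (φ n) (ψ n)} ∈ Uf := by
  cases ρ <;> rfl


lemma choose_fun {α : ℕ → Type} (hne : ∀ n, Nonempty (α n)) (P : ∀ n, α n → Prop) :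
    ∃ ψ : ∀ n, α n, ∀ n, (∃ w, P n w) → P n (ψ n) :=
  ⟨fun n => if h : ∃ w, P n w then h.choose else (hne n).some,
   fun n h => by simp only [dif_pos h]; exact h.choose_spec⟩

/-- Łoś's theorem for `ELIU` concepts. -/
lemma los_eliu (Uf : Ultrafilter ℕ) (Δf : ℕ → Type) (If : ∀ n, Interp C R (Δf n))
    (hne : ∀ n, Nonempty (Δf n)) (X : ELIU C R) :
    ∀ φ : ∀ n, Δf n, (X.sem (uProd Uf Δf If) φ ↔ {n | X.sem (If n) (φ n)} ∈ Uf) := by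
  induction X with
  | top => intro φ; exact ⟨fun _ => Filter.univ_mem' fun _ => trivial, fun _ => trivial⟩
  | bot => intro φ; exact ⟨fun h => h.elim, fun h => (Filter.empty_notMem Uf.toFilter (by simp only [ELIU.sem, Set.setOf_false] at h; exact h)).elim⟩
  | cn c => intro φ; exact Iff.rfl
  | inter X Y ihX ihY =>
      intro φ
      constructor
      · rintro ⟨hX, hY⟩
        exact Filter.mem_of_superset (Filter.inter_mem ((ihX φ).1 hX) ((ihY φ).1 hY))
          (fun n hn => ⟨hn.1, hn.2⟩)
      · intro h
        exact ⟨(ihX φ).2 (Filter.mem_of_superset h fun n hn => hn.1),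
               (ihY φ).2 (Filter.mem_of_superset h fun n hn => hn.2)⟩
  | union X Y ihX ihY =>
      intro φ
      constructor
      · rintro (h | h)
        · exact Filter.mem_of_superset ((ihX φ).1 h) fun n hn => Or.inl hn
        · exact Filter.mem_of_superset ((ihY φ).1 h) fun n hn => Or.inr hn
      · intro h
        have h2 : {n | X.sem (If n) (φ n)} ∪ {n | Y.sem (If n) (φ n)} ∈ Uf := h
        rcases Ultrafilter.union_mem_iff.1 h2 with h' | h'
        · exact Or.inl ((ihX φ).2 h')
        · exact Or.inr ((ihY φ).2 h')
  | exR ρ X ih =>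
      intro φ
      constructor
      · rintro ⟨ψ, hr, hX⟩
        refine Filter.mem_of_superset
          (Filter.inter_mem ((uProd_roleE Uf Δf If ρ φ ψ).1 hr) ((ih ψ).1 hX)) ?_
        intro n hn
        exact ⟨ψ n, hn.1, hn.2⟩
      · intro h
        obtain ⟨ψ, hψ⟩ := choose_fun hne
          (fun n w => (If n).roleE ρ (φ n) w ∧ X.sem (If n) w)
        refine ⟨ψ, ?_, ?_⟩
        · rw [uProd_roleE]
          exact Filter.mem_of_superset h fun n hn => (hψ n hn).1
        · rw [ih ψ]
          exact Filter.mem_of_superset h fun n hn => (hψ n hn).2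
  | exU X ih =>
      intro φ
      constructor
      · rintro ⟨ψ, hX⟩
        exact Filter.mem_of_superset ((ih ψ).1 hX) fun n hn => ⟨ψ n, hn⟩
      · intro h
        obtain ⟨ψ, hψ⟩ := choose_fun hne (fun n w => X.sem (If n) w)
        refine ⟨ψ, ?_⟩
        rw [ih ψ]
        exact Filter.mem_of_superset h fun n hn => hψ n hn

/-- Łoś's theorem for `ALCI` concepts. -/
lemma los_alci (Uf : Ultrafilter ℕ) (Δf : ℕ → Type) (If : ∀ n, Interp C R (Δf n))
    (hne : ∀ n, Nonempty (Δf n)) (X : ALCI C R) :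
    ∀ φ : ∀ n, Δf n, (X.sem (uProd Uf Δf If) φ ↔ {n | X.sem (If n) (φ n)} ∈ Uf) := by
  induction X with
  | top => intro φ; exact ⟨fun _ => Filter.univ_mem' fun _ => trivial, fun _ => trivial⟩
  | cn c => intro φ; exact Iff.rfl
  | neg X ih =>
      intro φ
      rw [show (ALCI.neg X).sem (uProd Uf Δf If) φ = ¬ X.sem (uProd Uf Δf If) φ from rfl,
        ih φ, ← Ultrafilter.compl_mem_iff_notMem]
      constructor
      · intro h; exact Filter.mem_of_superset h fun n hn => hn
      · intro h; exact Filter.mem_of_superset h fun n hn => hn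
  | inter X Y ihX ihY =>
      intro φ
      constructor
      · rintro ⟨hX, hY⟩
        exact Filter.mem_of_superset (Filter.inter_mem ((ihX φ).1 hX) ((ihY φ).1 hY))
          (fun n hn => ⟨hn.1, hn.2⟩)
      · intro h
        exact ⟨(ihX φ).2 (Filter.mem_of_superset h fun n hn => hn.1),
               (ihY φ).2 (Filter.mem_of_superset h fun n hn => hn.2)⟩
  | exR ρ X ih =>
      intro φ
      constructor
      · rintro ⟨ψ, hr, hX⟩
        refine Filter.mem_of_superset
          (Filter.inter_mem ((uProd_roleE Uf Δf If ρ φ ψ).1 hr) ((ih ψ).1 hX)) ?_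
        intro n hn
        exact ⟨ψ n, hn.1, hn.2⟩
      · intro h
        obtain ⟨ψ, hψ⟩ := choose_fun hne
          (fun n w => (If n).roleE ρ (φ n) w ∧ X.sem (If n) w)
        refine ⟨ψ, ?_, ?_⟩
        · rw [uProd_roleE]
          exact Filter.mem_of_superset h fun n hn => (hψ n hn).1
        · rw [ih ψ]
          exact Filter.mem_of_superset h fun n hn => (hψ n hn).2

lemma uProd_models (Uf : Ultrafilter ℕ) (Δf : ℕ → Type) (If : ∀ n, Interp C R (Δf n))
    (hne : ∀ n, Nonempty (Δf n)) (O : Set (ALCI C R × ALCI C R))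
    (hIO : ∀ n, ModelsALCIOnt (If n) O) :
    ModelsALCIOnt (uProd Uf Δf If) O := by
  intro p hp φ hφ
  rw [los_alci Uf Δf If hne] at hφ ⊢
  exact Filter.mem_of_superset hφ fun n hn => hIO n p hp (φ n) hn

end Stmt8

namespace Stmt8

open Interp

variable {C R A : Type}

lemma roleE_adom {D : Interp C R A} {ρ : R ⊕ R} {a b : A} (h : D.roleE ρ a b) :
    a ∈ D.adom ∧ b ∈ D.adom := by
  cases ρ with
  | inl r => exact ⟨Or.inr (Or.inl ⟨r, b, h⟩), Or.inr (Or.inr ⟨r, a, h⟩)⟩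
  | inr r => exact ⟨Or.inr (Or.inr ⟨r, b, h⟩), Or.inr (Or.inl ⟨r, a, h⟩)⟩

def upLen {D : Interp C R A} : ∀ {b : A}, UPath D b → ℕ
  | _, .nil _ => 0
  | _, .cons p _ _ _ => upLen p + 1

def upStart {D : Interp C R A} : ∀ {b : A}, UPath D b → A
  | _, .nil a => a
  | _, .cons p _ _ _ => upStart p

lemma upStart_mem_adom {D : Interp C R A} :
    ∀ {b : A} (p : UPath D b), b ∈ D.adom → upStart p ∈ D.adom := by
  intro b p
  induction p with
  | nil a => exact fun h => h
  | cons p ρ b h ih =>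
      intro _
      exact ih ((roleE_adom h).1)

section FinDB

variable (D : Interp C R A)

lemma cnSet_finite (hfin : D.FiniteFacts) (a : A) : {c : C | D.cn c a}.Finite := by
  refine Set.Finite.subset (hfin.1.image Prod.fst) ?_
  rintro c hc
  exact ⟨(c, a), hc, rfl⟩

lemma edgeSet_finite (hfin : D.FiniteFacts) (a : A) : {e : (R ⊕ R) × A | D.roleE e.1 a e.2}.Finite := by
  refine Set.Finite.subset
    ((hfin.2.image (fun t => (Sum.inl t.1, t.2.2))).union
      (hfin.2.image (fun t => (Sum.inr t.1, t.2.1)))) ?_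
  rintro ⟨ρ, b⟩ he
  cases ρ with
  | inl r => exact Or.inl ⟨(r, a, b), he, rfl⟩
  | inr r => exact Or.inr ⟨(r, b, a), he, rfl⟩

lemma adom_finite (hfin : D.FiniteFacts) : D.adom.Finite := by
  refine Set.Finite.subset
    (((hfin.1.image Prod.snd).union (hfin.2.image (fun t => t.2.1))).union
      (hfin.2.image (fun t => t.2.2))) ?_
  rintro a (⟨c, hc⟩ | ⟨r, b, hb⟩ | ⟨r, b, hb⟩)
  · exact Or.inl (Or.inl ⟨(c, a), hc, rfl⟩)
  · exact Or.inl (Or.inr ⟨(r, a, b), hb, rfl⟩)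
  · exact Or.inr ⟨(r, b, a), hb, rfl⟩

noncomputable def cnL (hfin : D.FiniteFacts) (a : A) : List C := (cnSet_finite D hfin a).toFinset.toList

lemma mem_cnL (hfin : D.FiniteFacts) {c : C} {a : A} : c ∈ cnL D hfin a ↔ D.cn c a := by
  rw [cnL, Finset.mem_toList, Set.Finite.mem_toFinset]
  exact Iff.rfl

noncomputable def edgeL (hfin : D.FiniteFacts) (a : A) : List ((R ⊕ R) × A) :=
  (edgeSet_finite D hfin a).toFinset.toList

lemma mem_edgeL (hfin : D.FiniteFacts) {e : (R ⊕ R) × A} {a : A} :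
    e ∈ edgeL D hfin a ↔ D.roleE e.1 a e.2 := by
  rw [edgeL, Finset.mem_toList, Set.Finite.mem_toFinset]
  exact Iff.rfl

noncomputable def adomL (hfin : D.FiniteFacts) : List A := (adom_finite D hfin).toFinset.toList

lemma mem_adomL (hfin : D.FiniteFacts) {a : A} : a ∈ adomL D hfin ↔ a ∈ D.adom := by
  rw [adomL, Finset.mem_toList, Set.Finite.mem_toFinset]

end FinDB

/-- Finite conjunction of concepts. -/
def bigI (l : List (ELIU C R)) : ELIU C R := l.foldr .inter .top

lemma bigI_sem {Δ : Type} (I : Interp C R Δ) (l : List (ELIU C R)) (z : Δ) :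
    (bigI l).sem I z ↔ ∀ X ∈ l, X.sem I z := by
  induction l with
  | nil => simp [bigI, ELIU.sem]
  | cons X l ih =>
      simp only [bigI, List.foldr_cons, ELIU.sem, List.mem_cons]
      rw [show (List.foldr ELIU.inter ELIU.top l) = bigI l from rfl, ih]
      constructor
      · rintro ⟨h1, h2⟩ Y (rfl | hY)
        · exact h1
        · exact h2 Y hY
      · intro h
        exact ⟨h X (Or.inl rfl), fun Y hY => h Y (Or.inr hY)⟩

lemma bigI_disjFree {l : List (ELIU C R)} (h : ∀ X ∈ l, X.disjFree) :
    (bigI l).disjFree := by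
  induction l with
  | nil => trivial
  | cons X l ih =>
      exact ⟨h X List.mem_cons_self, ih fun Y hY => h Y (List.mem_cons_of_mem _ hY)⟩

section Uconcept

variable (D : Interp C R A) (hfin : D.FiniteFacts)

/-- The depth-`n` unraveling concept of `D` at `a`. -/
noncomputable def Uc : ℕ → A → ELIU C R
  | 0 => fun a => bigI ((cnL D hfin a).map ELIU.cn)
  | n+1 => fun a => .inter (bigI ((cnL D hfin a).map ELIU.cn))
      (bigI ((edgeL D hfin a).map fun e => .exR e.1 (Uc n e.2)))

variable {Δ : Type} {I : Interp C R Δ}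

lemma Uc_disjFree : ∀ (n : ℕ) (a : A), (Uc D hfin n a).disjFree := by
  intro n
  induction n with
  | zero =>
      intro a
      refine bigI_disjFree fun X hX => ?_
      rcases List.mem_map.1 hX with ⟨c, _, rfl⟩
      trivial
  | succ n ih =>
      intro a
      refine ⟨bigI_disjFree fun X hX => ?_, bigI_disjFree fun X hX => ?_⟩
      · rcases List.mem_map.1 hX with ⟨c, _, rfl⟩
        trivial
      · rcases List.mem_map.1 hX with ⟨e, _, rfl⟩
        exact ih e.2

lemma Uc_cn {n : ℕ} {a : A} {z : Δ} {c : C}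
    (h : (Uc D hfin n a).sem I z) (hc : D.cn c a) : I.cn c z := by
  have key : ∀ l, (bigI l).sem I z → (ELIU.cn c) ∈ l → I.cn c z := by
    intro l hl hm
    exact (bigI_sem I l z).1 hl _ hm
  have hmem : (ELIU.cn c : ELIU C R) ∈ (cnL D hfin a).map (ELIU.cn (R := R)) :=
    List.mem_map_of_mem ((mem_cnL D hfin).2 hc)
  cases n with
  | zero => exact key _ h hmem
  | succ n => exact key _ h.1 hmem

lemma Uc_edge {n : ℕ} {a b : A} {ρ : R ⊕ R} {z : Δ}
    (h : (Uc D hfin (n+1) a).sem I z) (he : D.roleE ρ a b) :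
    ∃ w, I.roleE ρ z w ∧ (Uc D hfin n b).sem I w := by
  have hmem : (ELIU.exR ρ (Uc D hfin n b)) ∈
      (edgeL D hfin a).map (fun e => ELIU.exR e.1 (Uc D hfin n e.2)) :=
    List.mem_map_of_mem
      ((mem_edgeL D hfin (e := (ρ, b))).2 he)
  exact (bigI_sem I _ z).1 h.2 _ hmem

lemma Uc_mpr (g : A → Δ) (hc : ∀ c a, D.cn c a → I.cn c (g a))
    (hr : ∀ (ρ : R ⊕ R) (a b : A), D.roleE ρ a b → I.roleE ρ (g a) (g b)) :
    ∀ (n : ℕ) (a : A), (Uc D hfin n a).sem I (g a) := by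
  intro n
  induction n with
  | zero =>
      intro a
      refine (bigI_sem I _ _).2 fun X hX => ?_
      rcases List.mem_map.1 hX with ⟨c, hcm, rfl⟩
      exact hc c a ((mem_cnL D hfin).1 hcm)
  | succ n ih =>
      intro a
      refine ⟨(bigI_sem I _ _).2 fun X hX => ?_, (bigI_sem I _ _).2 fun X hX => ?_⟩
      · rcases List.mem_map.1 hX with ⟨c, hcm, rfl⟩
        exact hc c a ((mem_cnL D hfin).1 hcm)
      · rcases List.mem_map.1 hX with ⟨e, hem, rfl⟩
        exact ⟨g e.2, hr e.1 a e.2 ((mem_edgeL D hfin).1 hem), ih e.2⟩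

/-- A choice of witnesses along all paths, given that the depth-`n` unraveling
concept holds at `z`. -/
noncomputable def pmap (I : Interp C R Δ) (n : ℕ) (z junk : Δ) :
    ∀ {b : A}, UPath D b → Δ
  | _, .nil _ => z
  | _, .cons p ρ c h =>
      if hh : ∃ w, I.roleE ρ (pmap I n z junk p) w ∧
          (Uc D hfin (n - (upLen p + 1)) c).sem I w then hh.choose else junk

variable {n : ℕ} {a : A} {z junk : Δ}

lemma pmap_sem (hz : (Uc D hfin n a).sem I z) :
    ∀ {b : A} (p : UPath D b), upStart p = a → upLen p ≤ n →
      (Uc D hfin (n - upLen p) b).sem I (pmap D hfin I n z junk p) := by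
  intro b p
  induction p with
  | nil b =>
      intro hs _
      have : b = a := hs
      subst this
      simpa [pmap, upLen] using hz
  | cons p ρ c h ih =>
      intro hs hl
      have hl' : upLen p + 1 ≤ n := by simpa [upLen] using hl
      have hsem := ih hs (le_trans (Nat.le_succ _) hl')
      have harith : n - upLen p = (n - (upLen p + 1)) + 1 := by omega
      rw [harith] at hsem
      have hh : ∃ w, I.roleE ρ (pmap D hfin I n z junk p) w ∧
          (Uc D hfin (n - (upLen p + 1)) c).sem I w :=
        Uc_edge D hfin hsem h
      show (Uc D hfin (n - upLen (UPath.cons p ρ c h)) c).sem I _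
      rw [show upLen (UPath.cons p ρ c h) = upLen p + 1 from rfl]
      simp only [pmap]
      rw [dif_pos hh]
      exact hh.choose_spec.2

lemma pmap_step (hz : (Uc D hfin n a).sem I z) {b : A} (p : UPath D b)
    {ρ : R ⊕ R} {c : A} (h : D.roleE ρ b c)
    (hs : upStart p = a) (hl : upLen p + 1 ≤ n) :
    I.roleE ρ (pmap D hfin I n z junk p) (pmap D hfin I n z junk (UPath.cons p ρ c h)) := by
  have hsem := pmap_sem D hfin (junk := junk) hz p hs (le_trans (Nat.le_succ _) hl)
  have harith : n - upLen p = (n - (upLen p + 1)) + 1 := by omega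
  rw [harith] at hsem
  have hh : ∃ w, I.roleE ρ (pmap D hfin I n z junk p) w ∧
      (Uc D hfin (n - (upLen p + 1)) c).sem I w :=
    Uc_edge D hfin hsem h
  show I.roleE ρ (pmap D hfin I n z junk p) (pmap D hfin I n z junk (UPath.cons p ρ c h))
  simp only [pmap]
  rw [dif_pos hh]
  exact hh.choose_spec.1

lemma pmap_nil : pmap D hfin I n z junk (UPath.nil a) = z := rfl

end Uconcept

end Stmt8

namespace Stmt8

open Interp

variable {C R A : Type}

section UHom

variable (D : Interp C R A)

/-- Conditions on a family of witnesses along paths starting at `a`, up to depth `n`. -/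
def PathOk {Δ : Type} (I : Interp C R Δ) (n : ℕ) (a : A)
    (m : (Σ b : A, UPath D b) → Δ) : Prop :=
  (∀ (b : A) (p : UPath D b), upStart p = a → upLen p ≤ n →
    ∀ c, D.cn c b → I.cn c (m ⟨b, p⟩)) ∧
  (∀ (b : A) (p : UPath D b) (ρ : R ⊕ R) (c : A) (h : D.roleE ρ b c),
    upStart p = a → upLen p + 1 ≤ n →
      I.roleE ρ (m ⟨b, p⟩) (m ⟨c, p.cons ρ c h⟩))

lemma pathOk_pmap (hfin : D.FiniteFacts) {Δ : Type} {I : Interp C R Δ}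
    {n : ℕ} {a : A} {z junk : Δ} (hz : (Uc D hfin n a).sem I z) :
    PathOk D I n a (fun s => pmap D hfin I n z junk s.2) := by
  constructor
  · intro b p hs hl c hc
    exact Uc_cn D hfin (pmap_sem D hfin hz p hs hl) hc
  · intro b p ρ c h hs hl
    exact pmap_step D hfin hz p h hs hl

variable (Uf : Ultrafilter ℕ) (Δf : ℕ → Type) (If : ∀ n, Interp C R (Δf n))

lemma tail_mem (hUf : (Uf : Filter ℕ) ≤ Filter.cofinite) (k : ℕ) : {n : ℕ | k ≤ n} ∈ Uf := by
  apply hUf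
  rw [Filter.mem_cofinite]
  have : {n : ℕ | k ≤ n}ᶜ = Set.Iio k := by
    ext n
    simp [Set.mem_Iio, Nat.not_le]
  rw [this]
  exact Set.finite_Iio k

lemma exists_uHom (hUf : (Uf : Filter ℕ) ≤ Filter.cofinite) (hne : ∀ n, Nonempty (Δf n))
    (m : ∀ n, A → (Σ b : A, UPath D b) → Δf n)
    (hm : ∀ n a, a ∈ D.adom → PathOk D (If n) n a (m n a)) :
    ∃ g : Hom (treeUnravel D ∅) (uProd Uf Δf If),
      ∀ s : Σ b : A, UPath D b, g.toFun (.inr s) = fun n => m n (upStart s.2) s := by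
  refine ⟨⟨fun x => match x with
    | .inl _ => fun n => (hne n).some
    | .inr s => fun n => m n (upStart s.2) s, ?_, ?_⟩, fun s => rfl⟩
  · rintro c (a | ⟨b, p⟩) hx
    · exact absurd hx.1 (Set.notMem_empty a)
    · have hx' : D.cn c b := hx
      have hbad : b ∈ D.adom := Or.inl ⟨c, hx'⟩
      have hsa : upStart p ∈ D.adom := upStart_mem_adom p hbad
      refine Filter.mem_of_superset (tail_mem Uf hUf (upLen p)) ?_
      intro n hn
      exact (hm n (upStart p) hsa).1 b p rfl hn c hx'
  · rintro r x y (⟨a, b, ha, -⟩ | ⟨a, p, b, h, rfl, rfl⟩ | ⟨a, p, b, h, rfl, rfl⟩ |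
      ⟨a, b, p, ha, -⟩ | ⟨a, b, p, ha, -⟩)
    · exact absurd ha (Set.notMem_empty a)
    · have hsa : upStart p ∈ D.adom := upStart_mem_adom p (roleE_adom h).1
      refine Filter.mem_of_superset (tail_mem Uf hUf (upLen p + 1)) ?_
      intro n hn
      have := (hm n (upStart p) hsa).2 a p (.inl r) b h rfl hn
      exact this
    · have hsa : upStart p ∈ D.adom := upStart_mem_adom p (roleE_adom h).1
      refine Filter.mem_of_superset (tail_mem Uf hUf (upLen p + 1)) ?_
      intro n hn
      have := (hm n (upStart p) hsa).2 a p (.inr r) b h rfl hn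
      exact this
    · exact absurd ha (Set.notMem_empty a)
    · exact absurd ha (Set.notMem_empty a)

end UHom

end Stmt8

namespace Stmt8

open Interp

variable {C R A : Type}

/-! #### The chase of a database w.r.t. a set of `ELI^u_⊥` concept inclusions -/

inductive Ch (C R A : Type) : Type
  | base : A → Ch C R A
  | succ : Ch C R A → (R ⊕ R) → ELIU C R → Ch C R A
  | free : Ch C R A → ELIU C R → Ch C R A

abbrev Fct (C R A : Type) := (C × Ch C R A) ⊕ (R × Ch C R A × Ch C R A)

def roleFct (ρ : R ⊕ R) (x w : Ch C R A) : Fct C R A :=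
  match ρ with
  | .inl r => .inr (r, x, w)
  | .inr r => .inr (r, w, x)

def headF : ELIU C R → Ch C R A → Set (Fct C R A)
  | .top, _ => ∅
  | .bot, _ => ∅
  | .cn c, x => {.inl (c, x)}
  | .inter X Y, x => headF X x ∪ headF Y x
  | .union X _, x => headF X x
  | .exR ρ X, x => insert (roleFct ρ x (.succ x ρ X)) (headF X (.succ x ρ X))
  | .exU X, x => headF X (.free x X)

def hasFact (F : Set (Fct C R A)) (x : Ch C R A) : Prop :=
  (∃ c, .inl (c, x) ∈ F) ∨ (∃ r w, .inr (r, x, w) ∈ F) ∨ (∃ r w, .inr (r, w, x) ∈ F)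

def activeF (F : Set (Fct C R A)) (x : Ch C R A) : Prop :=
  (∃ a, x = .base a) ∨ hasFact F x

def semR (F : Set (Fct C R A)) : ELIU C R → Ch C R A → Prop
  | .top, _ => True
  | .bot, _ => False
  | .cn c, x => .inl (c, x) ∈ F
  | .inter X Y, x => semR F X x ∧ semR F Y x
  | .union X Y, x => semR F X x ∨ semR F Y x
  | .exR ρ X, x => ∃ w, roleFct ρ x w ∈ F ∧ semR F X w
  | .exU X, _ => ∃ w, activeF F w ∧ semR F X w

def baseFct (D : Interp C R A) : Set (Fct C R A) :=
  {f | (∃ c a, D.cn c a ∧ f = .inl (c, .base a)) ∨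
       (∃ r a b, D.rn r a b ∧ f = .inr (r, .base a, .base b))}

variable (T : Set (ELIU C R × ELIU C R)) (D : Interp C R A)

def chStep (F : Set (Fct C R A)) : Set (Fct C R A) :=
  baseFct D ∪ {f | ∃ p ∈ T, ∃ x, activeF F x ∧ semR F p.1 x ∧ f ∈ headF p.2 x}

def chSeq : ℕ → Set (Fct C R A)
  | 0 => ∅
  | n+1 => chStep T D (chSeq n)

def chF : Set (Fct C R A) := ⋃ n, chSeq T D n

variable {T D}

lemma hasFact_mono {F G : Set (Fct C R A)} (h : F ⊆ G) {x : Ch C R A}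
    (hx : hasFact F x) : hasFact G x := by
  rcases hx with ⟨c, hc⟩ | ⟨r, w, hw⟩ | ⟨r, w, hw⟩
  · exact Or.inl ⟨c, h hc⟩
  · exact Or.inr (Or.inl ⟨r, w, h hw⟩)
  · exact Or.inr (Or.inr ⟨r, w, h hw⟩)

lemma activeF_mono {F G : Set (Fct C R A)} (h : F ⊆ G) {x : Ch C R A}
    (hx : activeF F x) : activeF G x :=
  hx.imp id (hasFact_mono h)

lemma semR_mono {F G : Set (Fct C R A)} (h : F ⊆ G) :
    ∀ (X : ELIU C R) (x : Ch C R A), semR F X x → semR G X x := by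
  intro X
  induction X with
  | top => exact fun _ _ => trivial
  | bot => exact fun _ hx => hx.elim
  | cn c => exact fun x hx => h hx
  | inter X Y ihX ihY => exact fun x hx => ⟨ihX x hx.1, ihY x hx.2⟩
  | union X Y ihX ihY => exact fun x hx => hx.imp (ihX x) (ihY x)
  | exR ρ X ih => exact fun x ⟨w, hf, hs⟩ => ⟨w, h hf, ih w hs⟩
  | exU X ih => exact fun x ⟨w, ha, hs⟩ => ⟨w, activeF_mono h ha, ih w hs⟩

lemma chStep_mono {F G : Set (Fct C R A)} (h : F ⊆ G) :
    chStep T D F ⊆ chStep T D G := by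
  rintro f (hf | ⟨p, hp, x, ha, hs, hf⟩)
  · exact Or.inl hf
  · exact Or.inr ⟨p, hp, x, activeF_mono h ha, semR_mono h p.1 x hs, hf⟩

lemma chSeq_le_succ : ∀ n, chSeq T D n ⊆ chSeq T D (n + 1) := by
  intro n
  induction n with
  | zero => exact fun f hf => hf.elim
  | succ n ih => exact chStep_mono ih

lemma chSeq_mono {m n : ℕ} (h : m ≤ n) : chSeq T D m ⊆ chSeq T D n := by
  induction n with
  | zero => rw [Nat.le_zero.1 h]
  | succ n ih =>
      rcases Nat.lt_or_ge m (n + 1) with h' | h'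
      · exact fun f hf => chSeq_le_succ n (ih (Nat.lt_succ_iff.1 h') hf)
      · rw [Nat.le_antisymm h h']

lemma chSeq_subset_chF (n : ℕ) : chSeq T D n ⊆ chF T D :=
  fun f hf => Set.mem_iUnion.2 ⟨n, hf⟩

lemma mem_chF {f : Fct C R A} : f ∈ chF T D ↔ ∃ n, f ∈ chSeq T D n :=
  Set.mem_iUnion

lemma hasFact_chF {x : Ch C R A} (h : hasFact (chF T D) x) :
    ∃ n, hasFact (chSeq T D n) x := by
  rcases h with ⟨c, hc⟩ | ⟨r, w, hw⟩ | ⟨r, w, hw⟩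
  · rcases mem_chF.1 hc with ⟨n, hn⟩
    exact ⟨n, Or.inl ⟨c, hn⟩⟩
  · rcases mem_chF.1 hw with ⟨n, hn⟩
    exact ⟨n, Or.inr (Or.inl ⟨r, w, hn⟩)⟩
  · rcases mem_chF.1 hw with ⟨n, hn⟩
    exact ⟨n, Or.inr (Or.inr ⟨r, w, hn⟩)⟩

lemma activeF_chF {x : Ch C R A} (h : activeF (chF T D) x) :
    ∃ n, activeF (chSeq T D n) x := by
  rcases h with hb | hf
  · exact ⟨0, Or.inl hb⟩
  · rcases hasFact_chF hf with ⟨n, hn⟩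
    exact ⟨n, Or.inr hn⟩

lemma semR_fin : ∀ (X : ELIU C R) (x : Ch C R A),
    semR (chF T D) X x → ∃ n, semR (chSeq T D n) X x := by
  intro X
  induction X with
  | top => exact fun x _ => ⟨0, trivial⟩
  | bot => exact fun x hx => hx.elim
  | cn c => exact fun x hx => mem_chF.1 hx
  | inter X Y ihX ihY =>
      rintro x ⟨hX, hY⟩
      rcases ihX x hX with ⟨n1, h1⟩
      rcases ihY x hY with ⟨n2, h2⟩
      exact ⟨max n1 n2, semR_mono (chSeq_mono (le_max_left _ _)) X x h1,
        semR_mono (chSeq_mono (le_max_right _ _)) Y x h2⟩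
  | union X Y ihX ihY =>
      rintro x (hX | hY)
      · rcases ihX x hX with ⟨n, hn⟩
        exact ⟨n, Or.inl hn⟩
      · rcases ihY x hY with ⟨n, hn⟩
        exact ⟨n, Or.inr hn⟩
  | exR ρ X ih =>
      rintro x ⟨w, hf, hs⟩
      rcases mem_chF.1 hf with ⟨n1, h1⟩
      rcases ih w hs with ⟨n2, h2⟩
      exact ⟨max n1 n2, w, chSeq_mono (le_max_left _ _) h1,
        semR_mono (chSeq_mono (le_max_right _ _)) X w h2⟩
  | exU X ih =>
      rintro x ⟨w, ha, hs⟩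
      rcases activeF_chF ha with ⟨n1, h1⟩
      rcases ih w hs with ⟨n2, h2⟩
      exact ⟨max n1 n2, w, activeF_mono (chSeq_mono (le_max_left _ _)) h1,
        semR_mono (chSeq_mono (le_max_right _ _)) X w h2⟩

lemma baseFct_subset_chF : baseFct D ⊆ chF T D :=
  fun f hf => chSeq_subset_chF 1 (Or.inl hf)

lemma chF_prefixed : chStep T D (chF T D) ⊆ chF T D := by
  rintro f (hf | ⟨p, hp, x, ha, hs, hf⟩)
  · exact baseFct_subset_chF hf
  · rcases activeF_chF ha with ⟨n1, h1⟩
    rcases semR_fin p.1 x hs with ⟨n2, h2⟩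
    refine chSeq_subset_chF (max n1 n2 + 1) (Or.inr ⟨p, hp, x, ?_, ?_, hf⟩)
    · exact activeF_mono (chSeq_mono (le_max_left _ _)) h1
    · exact semR_mono (chSeq_mono (le_max_right _ _)) p.1 x h2

variable (T D)

def chDom : Type := {x : Ch C R A // activeF (chF T D) x}

def chI : Interp C R (chDom T D) where
  cn c x := .inl (c, x.1) ∈ chF T D
  rn r x y := .inr (r, x.1, y.1) ∈ chF T D

variable {T D}

lemma chI_roleE (ρ : R ⊕ R) (x y : chDom T D) :
    (chI T D).roleE ρ x y ↔ roleFct ρ x.1 y.1 ∈ chF T D := by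
  cases ρ <;> rfl

lemma roleFct_act {F : Set (Fct C R A)} {ρ : R ⊕ R} {x w : Ch C R A}
    (h : roleFct ρ x w ∈ F) : activeF F x ∧ activeF F w := by
  cases ρ with
  | inl r =>
      exact ⟨Or.inr (Or.inr (Or.inl ⟨r, w, h⟩)), Or.inr (Or.inr (Or.inr ⟨r, x, h⟩))⟩
  | inr r =>
      exact ⟨Or.inr (Or.inr (Or.inr ⟨r, w, h⟩)), Or.inr (Or.inr (Or.inl ⟨r, x, h⟩))⟩

lemma bridge : ∀ (X : ELIU C R) (x : chDom T D),
    X.sem (chI T D) x ↔ semR (chF T D) X x.1 := by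
  intro X
  induction X with
  | top => exact fun x => Iff.rfl
  | bot => exact fun x => Iff.rfl
  | cn c => exact fun x => Iff.rfl
  | inter X Y ihX ihY =>
      exact fun x => and_congr (ihX x) (ihY x)
  | union X Y ihX ihY =>
      exact fun x => or_congr (ihX x) (ihY x)
  | exR ρ X ih =>
      intro x
      constructor
      · rintro ⟨w, hr, hs⟩
        exact ⟨w.1, (chI_roleE ρ x w).1 hr, (ih w).1 hs⟩
      · rintro ⟨w, hf, hs⟩
        have hact : activeF (chF T D) w := (roleFct_act hf).2
        exact ⟨⟨w, hact⟩, (chI_roleE ρ x ⟨w, hact⟩).2 hf, (ih ⟨w, hact⟩).2 hs⟩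
  | exU X ih =>
      intro x
      constructor
      · rintro ⟨w, hs⟩
        exact ⟨w.1, w.2, (ih w).1 hs⟩
      · rintro ⟨w, hact, hs⟩
        exact ⟨⟨w, hact⟩, (ih ⟨w, hact⟩).2 hs⟩

def hasRoot : ELIU C R → Prop
  | .cn _ => True
  | .exR _ _ => True
  | .inter X Y => hasRoot X ∨ hasRoot Y
  | .union X _ => hasRoot X
  | _ => False

def touches (f : Fct C R A) (x : Ch C R A) : Prop :=
  match f with
  | .inl (_, z) => z = x
  | .inr (_, z, w) => z = x ∨ w = x

lemma touches_active {F : Set (Fct C R A)} {f : Fct C R A} {x : Ch C R A}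
    (hf : f ∈ F) (ht : touches f x) : activeF F x := by
  rcases f with ⟨c, z⟩ | ⟨r, z, w⟩
  · have hz : z = x := ht
    subst hz
    exact Or.inr (Or.inl ⟨c, hf⟩)
  · rcases (ht : z = x ∨ w = x) with rfl | rfl
    · exact Or.inr (Or.inr (Or.inl ⟨r, w, hf⟩))
    · exact Or.inr (Or.inr (Or.inr ⟨r, z, hf⟩))

lemma headF_root_fact : ∀ (X : ELIU C R) (x : Ch C R A), hasRoot X →
    ∃ f ∈ headF X x, touches f x := by
  intro X
  induction X with
  | top => exact fun x h => h.elim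
  | bot => exact fun x h => h.elim
  | cn c => exact fun x _ => ⟨.inl (c, x), rfl, rfl⟩
  | inter X Y ihX ihY =>
      rintro x (h | h)
      · rcases ihX x h with ⟨f, hf, ht⟩
        exact ⟨f, Or.inl hf, ht⟩
      · rcases ihY x h with ⟨f, hf, ht⟩
        exact ⟨f, Or.inr hf, ht⟩
  | union X Y ihX ihY =>
      intro x h
      rcases ihX x h with ⟨f, hf, ht⟩
      exact ⟨f, hf, ht⟩
  | exR ρ X ih =>
      intro x _
      refine ⟨roleFct ρ x (.succ x ρ X), Set.mem_insert _ _, ?_⟩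
      cases ρ with
      | inl r => exact Or.inl rfl
      | inr r => exact Or.inr rfl
  | exU X ih => exact fun x h => h.elim

def rlz : ELIU C R → Prop
  | .top => True
  | .bot => False
  | .cn _ => True
  | .inter X Y => rlz X ∧ rlz Y
  | .union X Y => rlz X ∨ rlz Y
  | .exR _ X => rlz X
  | .exU X => rlz X

lemma sem_rlz {Δ : Type} {M : Interp C R Δ} :
    ∀ (X : ELIU C R) (y : Δ), X.sem M y → rlz X := by
  intro X
  induction X with
  | top => exact fun _ _ => trivial
  | bot => exact fun _ h => h.elim
  | cn c => exact fun _ _ => trivial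
  | inter X Y ihX ihY => exact fun y h => ⟨ihX y h.1, ihY y h.2⟩
  | union X Y ihX ihY => exact fun y h => h.imp (ihX y) (ihY y)
  | exR ρ X ih => exact fun y ⟨w, _, hs⟩ => ih w hs
  | exU X ih => exact fun y ⟨w, hs⟩ => ih w hs

lemma headF_realizes : ∀ (X : ELIU C R), X.disjFree → rlz X →
    ∀ x : Ch C R A, headF X x ⊆ chF T D →
    ((activeF (chF T D) x → semR (chF T D) X x) ∧
     (¬ hasRoot X → ∀ b, activeF (chF T D) b → semR (chF T D) X b)) := by
  intro X
  induction X with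
  | top => exact fun _ _ x _ => ⟨fun _ => trivial, fun _ _ _ => trivial⟩
  | bot => exact fun _ h => h.elim
  | cn c =>
      intro _ _ x hsub
      exact ⟨fun _ => hsub rfl, fun h => absurd trivial h⟩
  | inter X Y ihX ihY =>
      intro hd hr x hsub
      have hX := ihX hd.1 hr.1 x (fun f hf => hsub (Or.inl hf))
      have hY := ihY hd.2 hr.2 x (fun f hf => hsub (Or.inr hf))
      refine ⟨fun hact => ⟨hX.1 hact, hY.1 hact⟩, fun hroot b hb => ?_⟩
      have hrX : ¬ hasRoot X := fun h => hroot (Or.inl h)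
      have hrY : ¬ hasRoot Y := fun h => hroot (Or.inr h)
      exact ⟨hX.2 hrX b hb, hY.2 hrY b hb⟩
  | union X Y ihX ihY => exact fun hd => hd.elim
  | exR ρ X ih =>
      intro hd hr x hsub
      refine ⟨fun hact => ?_, fun h => absurd trivial h⟩
      have hE : roleFct ρ x (.succ x ρ X) ∈ chF T D := hsub (Set.mem_insert _ _)
      have hact' : activeF (chF T D) (.succ x ρ X) := (roleFct_act hE).2
      have := (ih hd hr (.succ x ρ X) (fun f hf => hsub (Set.mem_insert_of_mem _ hf))).1 hact'
      exact ⟨.succ x ρ X, hE, this⟩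
  | exU X ih =>
      intro hd hr x hsub
      by_cases hroot : hasRoot X
      · rcases headF_root_fact X (.free x X) hroot with ⟨f, hfm, hft⟩
        have hact' : activeF (chF T D) (.free x X) := touches_active (hsub hfm) hft
        have := (ih hd hr (.free x X) hsub).1 hact'
        exact ⟨fun _ => ⟨.free x X, hact', this⟩, fun _ _ _ => ⟨.free x X, hact', this⟩⟩
      · have h2 := (ih hd hr (.free x X) hsub).2 hroot
        exact ⟨fun hact => ⟨x, hact, h2 x hact⟩, fun _ b hb => ⟨b, hb, h2 b hb⟩⟩

end Stmt8

namespace Stmt8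

open Interp

variable {C R A : Type}

section SimSec

variable {Δ : Type} (M : Interp C R Δ) (H : A → Δ → Prop)

/-- The simulation relation from chase elements into a model `M`. -/
def Sim : Ch C R A → Δ → Prop
  | .base a => H a
  | .succ u ρ X => fun y => ∃ y₀, Sim u y₀ ∧ M.roleE ρ y₀ y ∧ X.sem M y
  | .free _ X => fun y => X.sem M y

def Good (f : Fct C R A) : Prop :=
  match f with
  | .inl (c, x) => ∀ y, Sim M H x y → M.cn c y
  | .inr (r, u, v) =>
      (∀ y, Sim M H u y → ∃ y', M.rn r y y' ∧ Sim M H v y') ∧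
      (∀ y, Sim M H v y → ∃ y', M.rn r y' y ∧ Sim M H u y')

def endOk (f : Fct C R A) : Prop :=
  match f with
  | .inl (_, x) => ∃ y, Sim M H x y
  | .inr (_, u, v) => (∃ y, Sim M H u y) ∧ (∃ y, Sim M H v y)

variable {M H}

lemma active_sim {F : Set (Fct C R A)} (hP : ∀ f ∈ F, Good M H f ∧ endOk M H f)
    (Htot : ∀ a, ∃ y, H a y) :
    ∀ x, activeF F x → ∃ y, Sim M H x y := by
  rintro x (⟨a, rfl⟩ | ⟨c, hc⟩ | ⟨r, w, hw⟩ | ⟨r, w, hw⟩)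
  · exact Htot a
  · exact (hP _ hc).2
  · exact ((hP _ hw).2 : endOk M H (.inr (r, x, w))).1
  · exact ((hP _ hw).2 : endOk M H (.inr (r, w, x))).2

lemma transfer {F : Set (Fct C R A)} (hG : ∀ f ∈ F, Good M H f)
    (hE : ∀ x, activeF F x → ∃ y, Sim M H x y) :
    ∀ (X : ELIU C R) (x : Ch C R A) (y : Δ), semR F X x → Sim M H x y → X.sem M y := by
  intro X
  induction X with
  | top => exact fun _ _ _ _ => trivial
  | bot => exact fun _ _ hx _ => hx.elim
  | cn c => exact fun x y hx hS => (hG _ hx : Good M H (.inl (c, x))) y hS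
  | inter X Y ihX ihY =>
      exact fun x y hx hS => ⟨ihX x y hx.1 hS, ihY x y hx.2 hS⟩
  | union X Y ihX ihY =>
      exact fun x y hx hS => hx.imp (fun h => ihX x y h hS) (fun h => ihY x y h hS)
  | exR ρ X ih =>
      rintro x y ⟨w, hf, hs⟩ hS
      cases ρ with
      | inl r =>
          obtain ⟨y', hrn, hSw⟩ := (hG _ hf : Good M H (.inr (r, x, w))).1 y hS
          exact ⟨y', hrn, ih w y' hs hSw⟩
      | inr r =>
          obtain ⟨y', hrn, hSw⟩ := (hG _ hf : Good M H (.inr (r, w, x))).2 y hS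
          exact ⟨y', hrn, ih w y' hs hSw⟩
  | exU X ih =>
      rintro x y ⟨w, hact, hs⟩ _
      obtain ⟨yw, hSw⟩ := hE w hact
      exact ⟨yw, ih w yw hs hSw⟩

lemma head_good : ∀ (X : ELIU C R), X.disjFree → ∀ x : Ch C R A,
    (∀ y, Sim M H x y → X.sem M y) → (∃ y, Sim M H x y ∧ X.sem M y) →
    ∀ f ∈ headF X x, Good M H f ∧ endOk M H f := by
  intro X
  induction X with
  | top => exact fun _ _ _ _ f hf => hf.elim
  | bot => exact fun _ _ _ _ f hf => hf.elim
  | cn c =>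
      rintro _ x hAll hEx f rfl
      obtain ⟨y, hS, _⟩ := hEx
      exact ⟨fun y hS => hAll y hS, ⟨y, hS⟩⟩
  | inter X Y ihX ihY =>
      rintro hd x hAll hEx f (hf | hf)
      · exact ihX hd.1 x (fun y hS => (hAll y hS).1)
          (hEx.imp fun y h => ⟨h.1, h.2.1⟩) f hf
      · exact ihY hd.2 x (fun y hS => (hAll y hS).2)
          (hEx.imp fun y h => ⟨h.1, h.2.2⟩) f hf
  | union X Y ihX ihY => exact fun hd => hd.elim
  | exR ρ X ih =>
      rintro hd x hAll hEx f hf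
      have hAll' : ∀ y₁, Sim M H (.succ x ρ X) y₁ → X.sem M y₁ := by
        rintro y₁ ⟨y₀, hS0, hr, hsX⟩
        exact hsX
      have hEx' : ∃ y₁, Sim M H (.succ x ρ X) y₁ ∧ X.sem M y₁ := by
        obtain ⟨y, hS, y', hr, hsX⟩ := hEx
        exact ⟨y', ⟨y, hS, hr, hsX⟩, hsX⟩
      rcases Set.mem_insert_iff.1 hf with rfl | hf
      · constructor
        · cases ρ with
          | inl r =>
              show Good M H (.inr (r, x, .succ x (.inl r) X))
              constructor
              · intro y hS
                obtain ⟨y', hr, hsX⟩ := hAll y hS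
                exact ⟨y', hr, ⟨y, hS, hr, hsX⟩⟩
              · rintro y' ⟨y₀, hS0, hr, hsX⟩
                exact ⟨y₀, hr, hS0⟩
          | inr r =>
              show Good M H (.inr (r, .succ x (.inr r) X, x))
              constructor
              · rintro y₁ ⟨y₀, hS0, hr, hsX⟩
                exact ⟨y₀, hr, hS0⟩
              · intro y hS
                obtain ⟨y', hr, hsX⟩ := hAll y hS
                exact ⟨y', hr, ⟨y, hS, hr, hsX⟩⟩
        · cases ρ with
          | inl r =>
              show endOk M H (.inr (r, x, .succ x (.inl r) X))
              exact ⟨hEx.imp fun y h => h.1, hEx'.imp fun y h => h.1⟩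
          | inr r =>
              show endOk M H (.inr (r, .succ x (.inr r) X, x))
              exact ⟨hEx'.imp fun y h => h.1, hEx.imp fun y h => h.1⟩
      · exact ih hd (.succ x ρ X) hAll' hEx' f hf
  | exU X ih =>
      rintro hd x hAll hEx f hf
      have hAll' : ∀ y₁, Sim M H (.free x X) y₁ → X.sem M y₁ := fun y₁ h => h
      have hEx' : ∃ y₁, Sim M H (.free x X) y₁ ∧ X.sem M y₁ := by
        obtain ⟨y, hS, y', hsX⟩ := hEx
        exact ⟨y', hsX, hsX⟩
      exact ih hd (.free x X) hAll' hEx' f hf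

end SimSec

end Stmt8

namespace Stmt8

open Interp

variable {C R A : Type}

section ChaseMain

variable {Δ : Type} {T : Set (ELIU C R × ELIU C R)} {D : Interp C R A}
variable {M : Interp C R Δ} {H : A → Δ → Prop}

lemma stage_inv (hM : ModelsELIUOnt M T) (hTd : ∀ p ∈ T, (p.2 : ELIU C R).disjFree)
    (Htot : ∀ a, ∃ y, H a y)
    (Hcn : ∀ (c : C) (a : A) (y : Δ), D.cn c a → H a y → M.cn c y)
    (Hrole : ∀ (ρ : R ⊕ R) (a b : A) (y : Δ), D.roleE ρ a b → H a y →
      ∃ y', M.roleE ρ y y' ∧ H b y') :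
    ∀ n, ∀ f ∈ chSeq T D n, Good M H f ∧ endOk M H f := by
  intro n
  induction n with
  | zero => exact fun f hf => hf.elim
  | succ n ih =>
      rintro f (hf | ⟨p, hp, x₀, hact, hsem, hf⟩)
      · rcases hf with ⟨c, a, hca, rfl⟩ | ⟨r, a, b, hab, rfl⟩
        · exact ⟨fun y hS => Hcn c a y hca hS, Htot a⟩
        · refine ⟨⟨?_, ?_⟩, Htot a, Htot b⟩
          · intro y hS
            obtain ⟨y', hr, hb⟩ := Hrole (.inl r) a b y hab hS
            exact ⟨y', hr, hb⟩
          · intro y hS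
            obtain ⟨y', hr, hb⟩ := Hrole (.inr r) b a y hab hS
            exact ⟨y', hr, hb⟩
      · have hE := active_sim ih Htot
        have hG : ∀ f ∈ chSeq T D n, Good M H f := fun f hf => (ih f hf).1
        have hAll : ∀ y, Sim M H x₀ y → (p.2 : ELIU C R).sem M y := fun y hS =>
          hM p hp y (transfer hG hE p.1 x₀ y hsem hS)
        obtain ⟨y₀, hS0⟩ := hE x₀ hact
        exact head_good p.2 (hTd p hp) x₀ hAll ⟨y₀, hS0, hAll y₀ hS0⟩ f hf

lemma chF_good (hM : ModelsELIUOnt M T) (hTd : ∀ p ∈ T, (p.2 : ELIU C R).disjFree)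
    (Htot : ∀ a, ∃ y, H a y)
    (Hcn : ∀ (c : C) (a : A) (y : Δ), D.cn c a → H a y → M.cn c y)
    (Hrole : ∀ (ρ : R ⊕ R) (a b : A) (y : Δ), D.roleE ρ a b → H a y →
      ∃ y', M.roleE ρ y y' ∧ H b y') :
    ∀ f ∈ chF T D, Good M H f ∧ endOk M H f := by
  intro f hf
  rcases mem_chF.1 hf with ⟨n, hn⟩
  exact stage_inv hM hTd Htot Hcn Hrole n f hn

lemma chF_sim (hM : ModelsELIUOnt M T) (hTd : ∀ p ∈ T, (p.2 : ELIU C R).disjFree)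
    (Htot : ∀ a, ∃ y, H a y)
    (Hcn : ∀ (c : C) (a : A) (y : Δ), D.cn c a → H a y → M.cn c y)
    (Hrole : ∀ (ρ : R ⊕ R) (a b : A) (y : Δ), D.roleE ρ a b → H a y →
      ∃ y', M.roleE ρ y y' ∧ H b y') :
    ∀ x, activeF (chF T D) x → ∃ y, Sim M H x y :=
  active_sim (chF_good hM hTd Htot Hcn Hrole) Htot

lemma transfer_chF (hM : ModelsELIUOnt M T) (hTd : ∀ p ∈ T, (p.2 : ELIU C R).disjFree)
    (Htot : ∀ a, ∃ y, H a y)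
    (Hcn : ∀ (c : C) (a : A) (y : Δ), D.cn c a → H a y → M.cn c y)
    (Hrole : ∀ (ρ : R ⊕ R) (a b : A) (y : Δ), D.roleE ρ a b → H a y →
      ∃ y', M.roleE ρ y y' ∧ H b y') :
    ∀ (X : ELIU C R) (x : Ch C R A) (y : Δ),
      semR (chF T D) X x → Sim M H x y → X.sem M y :=
  transfer (fun f hf => (chF_good hM hTd Htot Hcn Hrole f hf).1)
    (chF_sim hM hTd Htot Hcn Hrole)

lemma chI_models (hM : ModelsELIUOnt M T) (hTd : ∀ p ∈ T, (p.2 : ELIU C R).disjFree)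
    (Htot : ∀ a, ∃ y, H a y)
    (Hcn : ∀ (c : C) (a : A) (y : Δ), D.cn c a → H a y → M.cn c y)
    (Hrole : ∀ (ρ : R ⊕ R) (a b : A) (y : Δ), D.roleE ρ a b → H a y →
      ∃ y', M.roleE ρ y y' ∧ H b y') :
    ModelsELIUOnt (chI T D) T := by
  intro p hp x hx
  rw [bridge] at hx ⊢
  obtain ⟨n1, h1⟩ := semR_fin p.1 x.1 hx
  obtain ⟨n2, h2⟩ := activeF_chF x.2
  have hsub : headF p.2 x.1 ⊆ chF T D := by
    intro f hf
    exact chSeq_subset_chF (max n1 n2 + 1) (Or.inr ⟨p, hp, x.1,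
      activeF_mono (chSeq_mono (le_max_right n1 n2)) h2,
      semR_mono (chSeq_mono (le_max_left n1 n2)) p.1 x.1 h1, hf⟩)
  have hrlz : rlz (p.2 : ELIU C R) := by
    obtain ⟨y, hS⟩ := chF_sim hM hTd Htot Hcn Hrole x.1 x.2
    exact sem_rlz p.2 y (hM p hp y (transfer_chF hM hTd Htot Hcn Hrole p.1 x.1 y hx hS))
  exact (headF_realizes p.2 (hTd p hp) hrlz x.1 hsub).1 x.2

end ChaseMain

def chHom (T : Set (ELIU C R × ELIU C R)) (D : Interp C R A) : Hom D (chI T D) where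
  toFun a := ⟨.base a, Or.inl ⟨a, rfl⟩⟩
  map_cn c a h := baseFct_subset_chF (Or.inl ⟨c, a, h, rfl⟩)
  map_rn r a b h := baseFct_subset_chF (Or.inr ⟨r, a, b, h, rfl⟩)

lemma nonempty_chDom (T : Set (ELIU C R × ELIU C R)) (D : Interp C R A)
    (ha : Nonempty A) : Nonempty (chDom T D) :=
  ⟨⟨.base ha.some, Or.inl ⟨ha.some, rfl⟩⟩⟩

end Stmt8

namespace Stmt8

open Interp

variable {C R A : Type}

lemma hom_roleE {Δ : Type} {D : Interp C R A} {I : Interp C R Δ} (h : Hom D I) :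
    ∀ (ρ : R ⊕ R) (a b : A), D.roleE ρ a b → I.roleE ρ (h.toFun a) (h.toFun b) := by
  intro ρ a b hd
  cases ρ with
  | inl r => exact h.map_rn r a b hd
  | inr r => exact h.map_rn r b a hd

lemma Uc_sem_hom {Δ : Type} (D : Interp C R A) (hfin : D.FiniteFacts)
    {I : Interp C R Δ} (h : Hom D I) (n : ℕ) (a : A) :
    (Uc D hfin n a).sem I (h.toFun a) :=
  Uc_mpr D hfin h.toFun (fun c a hc => h.map_cn c a hc) (hom_roleE h) n a

noncomputable def Cbase (D : Interp C R A) (hfin : D.FiniteFacts) (n : ℕ) : ELIU C R :=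
  bigI ((adomL D hfin).map fun a => .exU (Uc D hfin n a))

lemma Cbase_disjFree (D : Interp C R A) (hfin : D.FiniteFacts) (n : ℕ) :
    (Cbase D hfin n).disjFree := by
  refine bigI_disjFree fun X hX => ?_
  rcases List.mem_map.1 hX with ⟨a, _, rfl⟩
  exact Uc_disjFree D hfin n a

lemma Cbase_sem_hom {Δ : Type} (D : Interp C R A) (hfin : D.FiniteFacts)
    {I : Interp C R Δ} (h : Hom D I) (n : ℕ) (z : Δ) :
    (Cbase D hfin n).sem I z := by
  refine (bigI_sem I _ z).2 fun X hX => ?_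
  rcases List.mem_map.1 hX with ⟨a, _, rfl⟩
  exact ⟨h.toFun a, Uc_sem_hom D hfin h n a⟩

lemma Cbase_sem_elim {Δ : Type} {D : Interp C R A} {hfin : D.FiniteFacts}
    {I : Interp C R Δ} {n : ℕ} {z : Δ} (hz : (Cbase D hfin n).sem I z)
    {a : A} (ha : a ∈ D.adom) : ∃ w, (Uc D hfin n a).sem I w := by
  have hX : (ELIU.exU (Uc D hfin n a)) ∈ (adomL D hfin).map
      (fun a => ELIU.exU (Uc D hfin n a)) :=
    List.mem_map_of_mem ((mem_adomL D hfin).2 ha)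
  exact (bigI_sem I _ z).1 hz _ hX

/-- The copy relation between database elements and model elements obtained
from a homomorphism from the tree unraveling. -/
def copyH {Δ : Type} (D : Interp C R A) (M : Interp C R Δ)
    (f : Hom (treeUnravel D ∅) M) : A → Δ → Prop :=
  fun a y => ∃ p : UPath D a, y = f.toFun (.inr ⟨a, p⟩)

section CopyH

variable {Δ : Type} {D : Interp C R A} {M : Interp C R Δ}
variable (f : Hom (treeUnravel D ∅) M)

lemma copyH_tot : ∀ a, ∃ y, copyH D M f a y :=
  fun a => ⟨f.toFun (.inr ⟨a, .nil a⟩), ⟨.nil a, rfl⟩⟩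

lemma copyH_cn : ∀ (c : C) (a : A) (y : Δ), D.cn c a → copyH D M f a y → M.cn c y := by
  rintro c a y hc ⟨p, rfl⟩
  exact f.map_cn c (.inr ⟨a, p⟩) hc

lemma copyH_role : ∀ (ρ : R ⊕ R) (a b : A) (y : Δ), D.roleE ρ a b → copyH D M f a y →
    ∃ y', M.roleE ρ y y' ∧ copyH D M f b y' := by
  rintro ρ a b y hab ⟨p, rfl⟩
  cases ρ with
  | inl r =>
      refine ⟨f.toFun (.inr ⟨b, p.cons (.inl r) b hab⟩), ?_, ⟨_, rfl⟩⟩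
      exact f.map_rn r (.inr ⟨a, p⟩) (.inr ⟨b, p.cons (.inl r) b hab⟩)
        (Or.inr (Or.inl ⟨a, p, b, hab, rfl, rfl⟩))
  | inr r =>
      refine ⟨f.toFun (.inr ⟨b, p.cons (.inr r) b hab⟩), ?_, ⟨_, rfl⟩⟩
      exact f.map_rn r (.inr ⟨b, p.cons (.inr r) b hab⟩) (.inr ⟨a, p⟩)
        (Or.inr (Or.inr (Or.inl ⟨a, p, b, hab, rfl, rfl⟩)))

end CopyH

section UltraCons

variable (D : Interp C R A) (hfin : D.FiniteFacts)
variable (Uf : Ultrafilter ℕ) (Δf : ℕ → Type) (If : ∀ n, Interp C R (Δf n))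

/-- Ultraproduct homomorphism from counterexample models, with a designated root. -/
lemma ultra_hom (hUf : (Uf : Filter ℕ) ≤ Filter.cofinite) (hne : ∀ n, Nonempty (Δf n))
    (y : ∀ n, Δf n) (hCb : ∀ n, (Cbase D hfin n).sem (If n) (y n))
    (a0 : A) (hroot : ∀ n, (Uc D hfin n a0).sem (If n) (y n)) :
    ∃ g : Hom (treeUnravel D ∅) (uProd Uf Δf If),
      g.toFun (.inr ⟨a0, .nil a0⟩) = y := by
  set m : ∀ n, A → (Σ b : A, UPath D b) → Δf n := fun n a =>
    if a = a0 then (fun s => pmap D hfin (If n) n (y n) (hne n).some s.2)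
    else if ha : a ∈ D.adom then
      (fun s => pmap D hfin (If n) n (Cbase_sem_elim (hCb n) ha).choose (hne n).some s.2)
    else (fun _ => (hne n).some) with hm_def
  have hm : ∀ n a, a ∈ D.adom → PathOk D (If n) n a (m n a) := by
    intro n a ha
    by_cases h0 : a = a0
    · subst h0
      rw [hm_def]
      simp only [if_pos rfl]
      exact pathOk_pmap D hfin (hroot n)
    · rw [hm_def]
      simp only [if_neg h0, dif_pos ha]
      exact pathOk_pmap D hfin (Cbase_sem_elim (hCb n) ha).choose_spec
  obtain ⟨g, hg⟩ := exists_uHom D Uf Δf If hUf hne m hm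
  refine ⟨g, ?_⟩
  rw [hg ⟨a0, .nil a0⟩]
  funext n
  show m n (upStart (UPath.nil a0)) ⟨a0, .nil a0⟩ = y n
  rw [show upStart (UPath.nil (I := D) a0) = a0 from rfl, hm_def]
  simp only [if_pos rfl]
  exact pmap_nil D hfin

/-- Ultraproduct homomorphism from counterexample models, rootless version. -/
lemma ultra_hom0 (hUf : (Uf : Filter ℕ) ≤ Filter.cofinite) (hne : ∀ n, Nonempty (Δf n))
    (y : ∀ n, Δf n) (hCb : ∀ n, (Cbase D hfin n).sem (If n) (y n)) :
    Nonempty (Hom (treeUnravel D ∅) (uProd Uf Δf If)) := by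
  set m : ∀ n, A → (Σ b : A, UPath D b) → Δf n := fun n a =>
    if ha : a ∈ D.adom then
      (fun s => pmap D hfin (If n) n (Cbase_sem_elim (hCb n) ha).choose (hne n).some s.2)
    else (fun _ => (hne n).some) with hm_def
  have hm : ∀ n a, a ∈ D.adom → PathOk D (If n) n a (m n a) := by
    intro n a ha
    rw [hm_def]
    simp only [dif_pos ha]
    exact pathOk_pmap D hfin (Cbase_sem_elim (hCb n) ha).choose_spec
  obtain ⟨g, -⟩ := exists_uHom D Uf Δf If hUf hne m hm
  exact ⟨g⟩

end UltraCons

end Stmt8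

namespace Stmt8

open Interp

variable {C R A : Type}

lemma part1_mp (O : Set (ALCI C R × ALCI C R)) (q : BELIQ C R)
    (D : Interp C R A) (t : Fin q.arity → A)
    (hL : Certain (fun _ I => ModelsELIUOnt I (ELIuApprox O)) D
      (fun _ I v => q.Eval I v) t) :
    Certain (fun _ I => ModelsALCIOnt I O) (treeUnravel D ∅)
      (fun _ I v => q.Eval I v)
      (fun i => Sum.inr ⟨t i, UPath.nil (t i)⟩) := by
  intro Δ hΔ M hMO f
  have hMT : ModelsELIUOnt M (ELIuApprox O) := models_approx O hΔ M hMO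
  have hTd : ∀ p ∈ ELIuApprox O, (p.2 : ELIU C R).disjFree := fun p hp => hp.2.1
  cases q with
  | q1 X =>
      have hA : Nonempty A := ⟨t ⟨0, Nat.zero_lt_one⟩⟩
      have hEval := hL (chDom (ELIuApprox O) D) (nonempty_chDom _ _ hA)
        (chI (ELIuApprox O) D)
        (chI_models hMT hTd (copyH_tot f) (copyH_cn f) (copyH_role f))
        (chHom (ELIuApprox O) D)
      have hx : X.sem (chI (ELIuApprox O) D)
          ((chHom (ELIuApprox O) D).toFun (t ⟨0, Nat.zero_lt_one⟩)) := hEval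
      have hsemR := (bridge X _).1 hx
      have hSim : Sim M (copyH D M f) (Ch.base (t ⟨0, Nat.zero_lt_one⟩))
          (f.toFun (.inr ⟨t ⟨0, Nat.zero_lt_one⟩, .nil (t ⟨0, Nat.zero_lt_one⟩)⟩)) :=
        ⟨.nil (t ⟨0, Nat.zero_lt_one⟩), rfl⟩
      exact transfer_chF hMT hTd (copyH_tot f) (copyH_cn f) (copyH_role f)
        X _ _ hsemR hSim
  | q0 X =>
      by_cases hA : Nonempty A
      · have hEval := hL (chDom (ELIuApprox O) D) (nonempty_chDom _ _ hA)
          (chI (ELIuApprox O) D)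
          (chI_models hMT hTd (copyH_tot f) (copyH_cn f) (copyH_role f))
          (chHom (ELIuApprox O) D)
        obtain ⟨b, hb⟩ := hEval
        have hsemR := (bridge X b).1 hb
        obtain ⟨y, hSim⟩ :=
          chF_sim hMT hTd (copyH_tot f) (copyH_cn f) (copyH_role f) b.1 b.2
        exact ⟨y, transfer_chF hMT hTd (copyH_tot f) (copyH_cn f) (copyH_role f)
          X b.1 y hsemR hSim⟩
      · have hhom : Hom D M :=
          ⟨fun a => (hA ⟨a⟩).elim, fun c a h => (hA ⟨a⟩).elim,
           fun r a b h => (hA ⟨a⟩).elim⟩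
        exact hL Δ hΔ M hMT hhom

lemma part1_mpr (O : Set (ALCI C R × ALCI C R)) (q : BELIQ C R) (hq : q.wf)
    (D : Interp C R A) (hfin : D.FiniteFacts) (t : Fin q.arity → A)
    (hR : Certain (fun _ I => ModelsALCIOnt I O) (treeUnravel D ∅)
      (fun _ I v => q.Eval I v)
      (fun i => Sum.inr ⟨t i, UPath.nil (t i)⟩)) :
    Certain (fun _ I => ModelsELIUOnt I (ELIuApprox O)) D
      (fun _ I v => q.Eval I v) t := by
  intro Δ hΔ I hIT h
  cases q with
  | q1 X =>
      set t0 := t ⟨0, Nat.zero_lt_one⟩ with ht0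
      by_cases hall : ∀ n : ℕ, ∃ (Δ' : Type), Nonempty Δ' ∧ ∃ I' : Interp C R Δ',
          ModelsALCIOnt I' O ∧ ∃ z,
            (ELIU.inter (Uc D hfin n t0) (Cbase D hfin n)).sem I' z ∧ ¬ X.sem I' z
      · exfalso
        choose Δf hneΔ If hIO z hCq hnq using hall
        set Uf := Ultrafilter.of (Filter.cofinite : Filter ℕ) with hUfdef
        have hUf : (Uf : Filter ℕ) ≤ Filter.cofinite := Ultrafilter.of_le (Filter.cofinite : Filter ℕ)
        obtain ⟨g, hg⟩ := ultra_hom D hfin Uf Δf If hUf hneΔ z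
          (fun n => (hCq n).2) t0 (fun n => (hCq n).1)
        have hEval := hR (∀ n, Δf n) ⟨fun n => (hneΔ n).some⟩ (uProd Uf Δf If)
          (uProd_models Uf Δf If hneΔ O hIO) g
        have hx : X.sem (uProd Uf Δf If) (g.toFun (.inr ⟨t0, .nil t0⟩)) := hEval
        rw [hg] at hx
        have hmem := (los_eliu Uf Δf If hneΔ X z).1 hx
        have hemp : {n | X.sem (If n) (z n)} = ∅ :=
          Set.eq_empty_iff_forall_notMem.2 hnq
        rw [hemp] at hmem
        exact Filter.empty_notMem Uf.toFilter hmem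
      · obtain ⟨n, hn⟩ := not_forall.1 hall
        have hmem : (ELIU.inter (Uc D hfin n t0) (Cbase D hfin n), X) ∈ ELIuApprox O := by
          refine ⟨⟨Uc_disjFree D hfin n t0, Cbase_disjFree D hfin n⟩, hq.1, ?_⟩
          intro Δ' hne' I' hI' w hw
          by_contra hqw
          exact hn ⟨Δ', hne', I', hI', w, hw, hqw⟩
        exact hIT _ hmem (h.toFun t0)
          ⟨Uc_sem_hom D hfin h n t0, Cbase_sem_hom D hfin h n _⟩
  | q0 X =>
      by_cases hall : ∀ n : ℕ, ∃ (Δ' : Type), Nonempty Δ' ∧ ∃ I' : Interp C R Δ',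
          ModelsALCIOnt I' O ∧ ∃ z,
            (Cbase D hfin n).sem I' z ∧ ¬ (∃ w, X.sem I' w)
      · exfalso
        choose Δf hneΔ If hIO z hCq hnq using hall
        set Uf := Ultrafilter.of (Filter.cofinite : Filter ℕ) with hUfdef
        have hUf : (Uf : Filter ℕ) ≤ Filter.cofinite := Ultrafilter.of_le (Filter.cofinite : Filter ℕ)
        obtain ⟨g⟩ := ultra_hom0 D hfin Uf Δf If hUf hneΔ z hCq
        have hEval := hR (∀ n, Δf n) ⟨fun n => (hneΔ n).some⟩ (uProd Uf Δf If)
          (uProd_models Uf Δf If hneΔ O hIO) g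
        obtain ⟨φ, hφ⟩ := hEval
        have hmem := (los_eliu Uf Δf If hneΔ X φ).1 hφ
        obtain ⟨n, hx⟩ := Filter.nonempty_of_mem hmem
        exact hnq n ⟨φ n, hx⟩
      · obtain ⟨n, hn⟩ := not_forall.1 hall
        have hmem : (Cbase D hfin n, ELIU.exU X) ∈ ELIuApprox O := by
          refine ⟨Cbase_disjFree D hfin n, hq.1, ?_⟩
          intro Δ' hne' I' hI' w hw
          by_contra hqw
          exact hn ⟨Δ', hne', I', hI', w, hw, hqw⟩
        exact hIT _ hmem (Classical.choice hΔ)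
          (Cbase_sem_hom D hfin h n (Classical.choice hΔ))

lemma part2_mp (O : Set (ALCI C R × ALCI C R)) (D : Interp C R A)
    (hfin : D.FiniteFacts)
    (hS : Satisfiable (fun _ I => ModelsELIUOnt I (ELIuApprox O)) D) :
    Satisfiable (fun _ I => ModelsALCIOnt I O) (treeUnravel D ∅) := by
  obtain ⟨ΔJ, hΔJ, J, hgne, hJT⟩ := hS
  have g : Hom D J := Classical.choice hgne
  by_cases hall : ∀ n : ℕ, ∃ (Δ' : Type), Nonempty Δ' ∧ ∃ I' : Interp C R Δ',
      ModelsALCIOnt I' O ∧ ∃ z, (Cbase D hfin n).sem I' z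
  · choose Δf hneΔ If hIO z hCq using hall
    set Uf := Ultrafilter.of (Filter.cofinite : Filter ℕ) with hUfdef
    have hUf : (Uf : Filter ℕ) ≤ Filter.cofinite := Ultrafilter.of_le (Filter.cofinite : Filter ℕ)
    exact ⟨∀ n, Δf n, ⟨fun n => (hneΔ n).some⟩, uProd Uf Δf If,
      ultra_hom0 D hfin Uf Δf If hUf hneΔ z hCq,
      uProd_models Uf Δf If hneΔ O hIO⟩
  · exfalso
    obtain ⟨n, hn⟩ := not_forall.1 hall
    have hmem : (Cbase D hfin n, ELIU.bot) ∈ ELIuApprox O := by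
      refine ⟨Cbase_disjFree D hfin n, trivial, ?_⟩
      intro Δ' hne' I' hI' w hw
      exact hn ⟨Δ', hne', I', hI', w, hw⟩
    exact hJT _ hmem (Classical.choice hΔJ)
      (Cbase_sem_hom D hfin g n (Classical.choice hΔJ))

lemma part2_mpr (O : Set (ALCI C R × ALCI C R)) (D : Interp C R A)
    (hS : Satisfiable (fun _ I => ModelsALCIOnt I O) (treeUnravel D ∅)) :
    Satisfiable (fun _ I => ModelsELIUOnt I (ELIuApprox O)) D := by
  obtain ⟨Δ, hΔ, M, hfne, hMO⟩ := hS
  have f : Hom (treeUnravel D ∅) M := Classical.choice hfne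
  have hMT : ModelsELIUOnt M (ELIuApprox O) := models_approx O hΔ M hMO
  have hTd : ∀ p ∈ ELIuApprox O, (p.2 : ELIU C R).disjFree := fun p hp => hp.2.1
  by_cases hA : Nonempty A
  · exact ⟨chDom (ELIuApprox O) D, nonempty_chDom _ _ hA, chI (ELIuApprox O) D,
      ⟨chHom (ELIuApprox O) D⟩,
      chI_models hMT hTd (copyH_tot f) (copyH_cn f) (copyH_role f)⟩
  · exact ⟨Δ, hΔ, M,
      ⟨⟨fun a => (hA ⟨a⟩).elim, fun c a h' => (hA ⟨a⟩).elim,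
        fun r a b h' => (hA ⟨a⟩).elim⟩⟩, hMT⟩

end Stmt8

/-- for an OMQ `(O, Σ, q)` with `O` an ALCI ontology and `q` a
bELIQ: (1) `t` is a certain answer w.r.t. the ontology `O≈` of all `ELI^u_⊥`
concept inclusions entailed by `O` iff `t` is a certain answer w.r.t. `O` on
the tree unraveling `D≈_∅`; (2) `D` is satisfiable w.r.t. `O≈` iff `D≈_∅` is
satisfiable w.r.t. `O`. -/
theorem stmt8 {C R A : Type} (O : Set (ALCI C R × ALCI C R)) (hOfin : O.Finite)
    (SC : Set C) (SR : Set R) (q : BELIQ C R) (hq : q.wf)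
    (D : Interp C R A) (hfin : D.FiniteFacts) (hsig : D.InSig SC SR)
    (t : Fin q.arity → A) (ht : ∀ i, t i ∈ D.adom) :
    (Certain (fun _ I => ModelsELIUOnt I (ELIuApprox O)) D
        (fun _ I v => q.Eval I v) t ↔
      Certain (fun _ I => ModelsALCIOnt I O) (treeUnravel D ∅)
        (fun _ I v => q.Eval I v)
        (fun i => Sum.inr ⟨t i, UPath.nil (t i)⟩)) ∧
    (Satisfiable (fun _ I => ModelsELIUOnt I (ELIuApprox O)) D ↔
      Satisfiable (fun _ I => ModelsALCIOnt I O) (treeUnravel D ∅)) := by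
  exact ⟨⟨Stmt8.part1_mp O q D t, Stmt8.part1_mpr O q hq D hfin t⟩,
    ⟨Stmt8.part2_mp O D hfin, Stmt8.part2_mpr O D⟩⟩
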